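/- Let Zρ_Z be a cq-state and f a Boolean function. Using the Pretty Good Measurement E with elements E_z = p(z) ρ_Z^{-1/2} ρ_z ρ_Z^{-1/2}, the trace distance between f(Z)ρ_Z and U_1 ρ_Z is at most the square root of half the variational distance between f(Z)E(ρ_Z) and U E(ρ_Z), where E(ρ_Z) is the classical distribution on Z induced by measuring ρ_Z with E. -/

import Mathlib

open scoped Kronecker ComplexOrder
open Matrix BigOperators
open scoped MatrixOrder

set_option linter.unusedSectionVars false
set_option maxHeartbeats 1000000

/-- Schatten-1 norm `‖A‖₁ = Tr √(AᴴA)`. -/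
noncomputable def trNorm {n m : Type*} [Fintype n] [Fintype m] [DecidableEq m] (A : Matrix n m ℂ) : ℝ :=
  ((CFC.sqrt (Aᴴ * A)).trace).re

/-- Trace distance `(1/2)‖A − B‖₁`. -/
noncomputable def trDist {n : Type*} [Fintype n] [DecidableEq n] (A B : Matrix n n ℂ) : ℝ :=
  (1/2) * trNorm (A - B)

/-- `ρ` is a density matrix. -/
def IsDensity {n : Type*} [Fintype n] (ρ : Matrix n n ℂ) : Prop :=
  ρ.PosSemidef ∧ ρ.trace = 1

/-- The Pretty Good Measurement element `E_{z'} = p(z') ρ^{-1/2} ρ_{z'} ρ^{-1/2}`. -/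
noncomputable def pgm {Z : Type*} [Fintype Z] {D : ℕ} (p : Z → ℝ)
    (ρ : Z → Matrix (Fin D) (Fin D) ℂ) (h : (∑ z, (p z : ℂ) • ρ z).PosDef) (z' : Z) :
    Matrix (Fin D) (Fin D) ℂ :=
  (p z' : ℂ) • ((CFC.sqrt (∑ z, (p z : ℂ) • ρ z))⁻¹ * ρ z' * (CFC.sqrt (∑ z, (p z : ℂ) • ρ z))⁻¹)

section Helpers

variable {n : Type*} [Fintype n] [DecidableEq n]

lemma trNorm_eq_of_sq {A B : Matrix n n ℂ} (hB : B.PosSemidef) (h : B ^ 2 = Aᴴ * A) :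
    trNorm A = B.trace.re := by
  rw [trNorm, ← h, CFC.sqrt_sq B (Matrix.nonneg_iff_posSemidef.mpr hB)]

lemma re_trace_mul_self (A : Matrix n n ℂ) (hA : A.IsHermitian) :
    (A * A).trace.re = ∑ i, ∑ j, ‖A i j‖ ^ 2 := by
  rw [Matrix.trace, Complex.re_sum]
  congr 1; ext i
  rw [Matrix.diag, Matrix.mul_apply, Complex.re_sum]
  congr 1; ext j
  have : A j i = (starRingEnd ℂ) (A i j) := by
    conv_lhs => rw [← hA]
    simp [Matrix.conjTranspose_apply]
  rw [this, Complex.mul_conj]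
  simp [Complex.sq_norm]

lemma re_trace_mul_self_nonneg (A : Matrix n n ℂ) (hA : A.IsHermitian) :
    0 ≤ (A * A).trace.re := by
  rw [re_trace_mul_self A hA]
  positivity

/-- Cauchy–Schwarz for the trace inner product on Hermitian matrices. -/
lemma cs_trace (A B : Matrix n n ℂ) (hA : A.IsHermitian) (hB : B.IsHermitian) :
    ((A * B).trace.re) ^ 2 ≤ (A * A).trace.re * (B * B).trace.re := by
  have habs : |(A * B).trace.re| ≤ ∑ i, ∑ j, ‖A i j‖ * ‖B i j‖ := by
    have h1 : (A * B).trace.re = ∑ i, ∑ j, (A i j * (starRingEnd ℂ) (B i j)).re := by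
      rw [Matrix.trace, Complex.re_sum]
      congr 1; ext i
      rw [Matrix.diag, Matrix.mul_apply, Complex.re_sum]
      congr 1; ext j
      congr 2
      conv_lhs => rw [← hB]
      simp [Matrix.conjTranspose_apply]
    rw [h1]
    calc |∑ i, ∑ j, (A i j * (starRingEnd ℂ) (B i j)).re|
        ≤ ∑ i, ∑ j, |(A i j * (starRingEnd ℂ) (B i j)).re| := by
          refine (Finset.abs_sum_le_sum_abs _ _).trans ?_
          refine Finset.sum_le_sum fun i _ => Finset.abs_sum_le_sum_abs _ _
      _ ≤ ∑ i, ∑ j, ‖A i j‖ * ‖B i j‖ := by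
          refine Finset.sum_le_sum fun i _ => Finset.sum_le_sum fun j _ => ?_
          refine (Complex.abs_re_le_norm _).trans ?_
          rw [norm_mul, Complex.norm_conj]
  have hcs : (∑ i, ∑ j, ‖A i j‖ * ‖B i j‖) ^ 2
      ≤ (∑ i, ∑ j, ‖A i j‖ ^ 2) * (∑ i, ∑ j, ‖B i j‖ ^ 2) := by
    rw [← Finset.sum_product', ← Finset.sum_product', ← Finset.sum_product']
    exact Finset.sum_mul_sq_le_sq_mul_sq _ _ _
  rw [re_trace_mul_self A hA, re_trace_mul_self B hB]
  calc ((A * B).trace.re) ^ 2 ≤ (∑ i, ∑ j, ‖A i j‖ * ‖B i j‖) ^ 2 := by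
        rw [← sq_abs]
        exact pow_le_pow_left₀ (abs_nonneg _) habs 2
    _ ≤ _ := hcs

lemma trace_unitary_conj {U X : Matrix n n ℂ} (h : Uᴴ * U = 1) :
    (U * X * Uᴴ).trace = X.trace := by
  rw [Matrix.trace_mul_comm (U * X) Uᴴ, ← Matrix.mul_assoc, h, Matrix.one_mul]

lemma conj_mul_conj {U D1 D2 : Matrix n n ℂ} (h : Uᴴ * U = 1) :
    (U * D1 * Uᴴ) * (U * D2 * Uᴴ) = U * (D1 * D2) * Uᴴ := by
  have : U * D1 * Uᴴ * (U * D2 * Uᴴ) = U * D1 * (Uᴴ * U) * D2 * Uᴴ := by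
    simp only [Matrix.mul_assoc]
  rw [this, h, Matrix.mul_one]
  simp only [Matrix.mul_assoc]

lemma exists_sign {J : Matrix n n ℂ} (hJ : J.IsHermitian) :
    ∃ W : Matrix n n ℂ, W.IsHermitian ∧ W * W = 1 ∧ (W * J).trace.re = trNorm J ∧ 0 ≤ trNorm J := by
  set U : Matrix n n ℂ := (hJ.eigenvectorUnitary : Matrix n n ℂ) with hU
  set lam := hJ.eigenvalues with hlam
  have hU1 : Uᴴ * U = 1 := by
    rw [← Matrix.star_eq_conjTranspose]
    exact Unitary.coe_star_mul_self hJ.eigenvectorUnitary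
  have hU2 : U * Uᴴ = 1 := by
    rw [← Matrix.star_eq_conjTranspose]
    exact Unitary.coe_mul_star_self hJ.eigenvectorUnitary
  have hspec : J = U * Matrix.diagonal (fun i => (lam i : ℂ)) * Uᴴ := by
    conv_lhs => rw [hJ.spectral_theorem]
    rfl
  set s : n → ℝ := fun i => if 0 ≤ lam i then 1 else -1 with hs
  have hsl : ∀ i, s i * lam i = |lam i| := by
    intro i
    by_cases h : 0 ≤ lam i
    · simp [hs, h, abs_of_nonneg h]
    · simp only [hs, if_neg h]
      rw [abs_of_neg (lt_of_not_ge h)]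
      ring
  refine ⟨U * Matrix.diagonal (fun i => (s i : ℂ)) * Uᴴ, ?_, ?_, ?_, ?_⟩
  · unfold Matrix.IsHermitian
    simp only [Matrix.conjTranspose_mul, Matrix.conjTranspose_conjTranspose,
      Matrix.diagonal_conjTranspose]
    have : star ((fun i => (s i : ℂ))) = fun i => (s i : ℂ) := by
      funext i; simp [Complex.conj_ofReal]
    rw [this, Matrix.mul_assoc]
  · rw [conj_mul_conj hU1, Matrix.diagonal_mul_diagonal]
    have : (fun i => (s i : ℂ) * (s i : ℂ)) = fun _ => 1 := by
      funext i; by_cases h : 0 ≤ lam i <;> simp [hs, h] <;> norm_num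
    rw [this, Matrix.diagonal_one, Matrix.mul_one, hU2]
  · have h1 : (U * Matrix.diagonal (fun i => (s i : ℂ)) * Uᴴ) * J
        = U * Matrix.diagonal (fun i => ((|lam i| : ℝ) : ℂ)) * Uᴴ := by
      conv_lhs => rw [hspec]
      rw [conj_mul_conj hU1, Matrix.diagonal_mul_diagonal]
      have : (fun i => ((s i : ℂ) * (lam i : ℂ))) = fun i => ((|lam i| : ℝ) : ℂ) := by
        funext i; rw [← Complex.ofReal_mul, hsl i]
      rw [this]
    rw [h1]
    have h2 : trNorm J = ((U * Matrix.diagonal (fun i => ((|lam i| : ℝ) : ℂ)) * Uᴴ).trace).re := by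
      refine trNorm_eq_of_sq ?_ ?_
      · refine Matrix.PosSemidef.mul_mul_conjTranspose_same ?_ U
        refine Matrix.posSemidef_diagonal_iff.mpr fun i => ?_
        rw [Complex.zero_le_real]
        exact abs_nonneg _
      · rw [show Jᴴ = J from hJ]
        conv_rhs => rw [hspec]
        rw [pow_two, conj_mul_conj hU1, conj_mul_conj hU1, Matrix.diagonal_mul_diagonal,
          Matrix.diagonal_mul_diagonal]
        have : (fun i => (((|lam i| : ℝ) : ℂ) * ((|lam i| : ℝ) : ℂ))) = fun i => ((lam i : ℂ) * (lam i : ℂ)) := by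
          funext i; rw [← Complex.ofReal_mul, ← Complex.ofReal_mul, abs_mul_abs_self]
        rw [this]
    rw [h2]
  · have h2 : trNorm J = ((U * Matrix.diagonal (fun i => ((|lam i| : ℝ) : ℂ)) * Uᴴ).trace).re := by
      refine trNorm_eq_of_sq ?_ ?_
      · refine Matrix.PosSemidef.mul_mul_conjTranspose_same ?_ U
        refine Matrix.posSemidef_diagonal_iff.mpr fun i => ?_
        rw [Complex.zero_le_real]
        exact abs_nonneg _
      · rw [show Jᴴ = J from hJ]
        conv_rhs => rw [hspec]
        rw [pow_two, conj_mul_conj hU1, conj_mul_conj hU1, Matrix.diagonal_mul_diagonal,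
          Matrix.diagonal_mul_diagonal]
        have : (fun i => (((|lam i| : ℝ) : ℂ) * ((|lam i| : ℝ) : ℂ))) = fun i => ((lam i : ℂ) * (lam i : ℂ)) := by
          funext i; rw [← Complex.ofReal_mul, ← Complex.ofReal_mul, abs_mul_abs_self]
        rw [this]
    rw [h2, trace_unitary_conj hU1, Matrix.trace_diagonal, Complex.re_sum]
    refine Finset.sum_nonneg fun i _ => ?_
    rw [Complex.ofReal_re]
    exact abs_nonneg _

/-- Key inequality: `‖J‖₁ ≤ √(Tr(S^{-1/2} J S^{-1/2} J))` for Hermitian `J` and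
positive definite `S` with unit trace. -/
lemma key_ineq {S J : Matrix n n ℂ} (hS : S.PosDef) (hJ : J.IsHermitian) (htr : S.trace = 1) :
    trNorm J ≤ Real.sqrt ((((CFC.sqrt S)⁻¹ * J * (CFC.sqrt S)⁻¹ * J).trace).re) := by
  set R := CFC.sqrt S with hRdef
  have hR : R.PosSemidef := Matrix.nonneg_iff_posSemidef.mp (CFC.sqrt_nonneg S)
  have hRR : R * R = S := CFC.sqrt_mul_sqrt_self S (Matrix.nonneg_iff_posSemidef.mpr hS.posSemidef)
  set Q := CFC.sqrt R with hQdef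
  have hQ : Q.PosSemidef := Matrix.nonneg_iff_posSemidef.mp (CFC.sqrt_nonneg R)
  have hQQ : Q * Q = R := CFC.sqrt_mul_sqrt_self R (Matrix.nonneg_iff_posSemidef.mpr hR)
  -- invertibility
  have hdetS : S.det ≠ 0 := hS.det_pos.ne'
  have hdetR : IsUnit R.det := by
    refine isUnit_iff_ne_zero.mpr fun h => hdetS ?_
    rw [← hRR, Matrix.det_mul, h, mul_zero]
  have hdetQ : IsUnit Q.det := by
    refine isUnit_iff_ne_zero.mpr fun h => hdetR.ne_zero ?_
    rw [← hQQ, Matrix.det_mul, h, mul_zero]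
  have hQi : Q * Q⁻¹ = 1 := Matrix.mul_nonsing_inv Q hdetQ
  have hQi' : Q⁻¹ * Q = 1 := Matrix.nonsing_inv_mul Q hdetQ
  have hQH : Q.IsHermitian := hQ.1
  have hQiH : (Q⁻¹).IsHermitian := hQH.inv
  set Y := Q⁻¹ * J * Q⁻¹ with hYdef
  have hYH : Y.IsHermitian := by
    unfold Matrix.IsHermitian
    rw [hYdef, Matrix.conjTranspose_mul, Matrix.conjTranspose_mul, hQiH.eq,
      show Jᴴ = J from hJ, Matrix.mul_assoc]
  have hQYQ : Q * Y * Q = J := by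
    rw [hYdef]
    calc Q * (Q⁻¹ * J * Q⁻¹) * Q = (Q * Q⁻¹) * J * (Q⁻¹ * Q) := by
          simp only [Matrix.mul_assoc]
      _ = J := by rw [hQi, hQi', Matrix.one_mul, Matrix.mul_one]
  obtain ⟨W, hWH, hWW, hWtr, htrnn⟩ := exists_sign hJ
  set A1 := Q * W * Q with hA1def
  have hA1H : A1.IsHermitian := by
    unfold Matrix.IsHermitian
    rw [hA1def, Matrix.conjTranspose_mul, Matrix.conjTranspose_mul, hQH.eq,
      show Wᴴ = W from hWH, Matrix.mul_assoc]
  -- trace identity : Tr(W J) = Tr(A1 Y)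
  have hstep1 : (W * J).trace = (A1 * Y).trace := by
    rw [← hQYQ]
    calc (W * (Q * Y * Q)).trace = ((W * Q * Y) * Q).trace := by simp only [Matrix.mul_assoc]
      _ = (Q * (W * Q * Y)).trace := by rw [Matrix.trace_mul_comm]
      _ = (A1 * Y).trace := by rw [hA1def]; simp only [Matrix.mul_assoc]
  -- Tr(A1*A1) ≤ 1
  have hA2 : (A1 * A1).trace = ((W * R * W) * R).trace := by
    have e1 : A1 * A1 = Q * (W * R * W) * Q := by
      rw [hA1def]
      calc Q * W * Q * (Q * W * Q) = Q * (W * (Q * Q) * W) * Q := by simp only [Matrix.mul_assoc]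
        _ = Q * (W * R * W) * Q := by rw [hQQ]
    rw [e1]
    calc (Q * (W * R * W) * Q).trace = (Q * (Q * (W * R * W))).trace := by
          rw [Matrix.trace_mul_comm]
      _ = ((Q * Q) * (W * R * W)).trace := by simp only [Matrix.mul_assoc]
      _ = ((W * R * W) * R).trace := by rw [hQQ, Matrix.trace_mul_comm]
  have hWRWH : (W * R * W).IsHermitian := by
    unfold Matrix.IsHermitian
    rw [Matrix.conjTranspose_mul, Matrix.conjTranspose_mul, show Wᴴ = W from hWH,
      show Rᴴ = R from hR.1, Matrix.mul_assoc]
  have hA1A1le : (A1 * A1).trace.re ≤ 1 := by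
    have hcs2 := cs_trace (W * R * W) R hWRWH hR.1
    have e2 : (W * R * W) * (W * R * W) = W * S * W := by
      calc (W * R * W) * (W * R * W) = W * R * (W * W) * R * W := by simp only [Matrix.mul_assoc]
        _ = W * (R * R) * W := by rw [hWW]; simp only [Matrix.mul_assoc, Matrix.one_mul]
        _ = W * S * W := by rw [hRR]
    have e3 : (W * S * W).trace = 1 := by
      calc (W * S * W).trace = (W * (W * S)).trace := by
            rw [Matrix.trace_mul_comm]
        _ = ((W * W) * S).trace := by simp only [Matrix.mul_assoc]
        _ = 1 := by rw [hWW, Matrix.one_mul, htr]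
    have e4 : (R * R).trace = 1 := by rw [hRR, htr]
    rw [e2, e3, e4] at hcs2
    simp only [Complex.one_re, mul_one] at hcs2
    rw [hA2]
    nlinarith [hcs2]
  have hYY : 0 ≤ (Y * Y).trace.re := re_trace_mul_self_nonneg Y hYH
  have hmain : (trNorm J) ^ 2 ≤ (Y * Y).trace.re := by
    have hcs1 := cs_trace A1 Y hA1H hYH
    have hA1A1nn : 0 ≤ (A1 * A1).trace.re := re_trace_mul_self_nonneg A1 hA1H
    calc (trNorm J) ^ 2 = ((A1 * Y).trace.re) ^ 2 := by rw [← hWtr, hstep1]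
      _ ≤ (A1 * A1).trace.re * (Y * Y).trace.re := hcs1
      _ ≤ 1 * (Y * Y).trace.re := by
          exact mul_le_mul_of_nonneg_right hA1A1le hYY
      _ = (Y * Y).trace.re := one_mul _
  have hYYtr : (Y * Y).trace = ((R⁻¹ * J * R⁻¹ * J)).trace := by
    have hRinv : R⁻¹ = Q⁻¹ * Q⁻¹ := by rw [← hQQ, Matrix.mul_inv_rev]
    calc (Y * Y).trace = ((Q⁻¹ * J * Q⁻¹ * (Q⁻¹ * J)) * Q⁻¹).trace := by
          rw [hYdef]; simp only [Matrix.mul_assoc]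
      _ = (Q⁻¹ * (Q⁻¹ * J * Q⁻¹ * (Q⁻¹ * J))).trace := by rw [Matrix.trace_mul_comm]
      _ = ((Q⁻¹ * Q⁻¹) * J * (Q⁻¹ * Q⁻¹) * J).trace := by simp only [Matrix.mul_assoc]
      _ = _ := by rw [← hRinv]
  calc trNorm J = Real.sqrt ((trNorm J) ^ 2) := (Real.sqrt_sq htrnn).symm
    _ ≤ _ := by
        refine Real.sqrt_le_sqrt ?_
        rw [← hYYtr]
        exact hmain

section Kron
variable {q : Type*} [Fintype q] [DecidableEq q]

lemma kron_conjTranspose (A : Matrix q q ℂ) (B : Matrix n n ℂ) :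
    (A ⊗ₖ B)ᴴ = Aᴴ ⊗ₖ Bᴴ := by
  ext ⟨a, i⟩ ⟨b, j⟩
  simp [Matrix.conjTranspose_apply, Matrix.kroneckerMap_apply]

lemma posSemidef_one_kron {P : Matrix n n ℂ} (hP : P.PosSemidef) :
    ((1 : Matrix q q ℂ) ⊗ₖ P).PosSemidef := by
  exact Matrix.PosSemidef.kronecker Matrix.PosSemidef.one hP

lemma trNorm_kron {A : Matrix q q ℂ} (B : Matrix n n ℂ) (hA : Aᴴ * A = 1) :
    trNorm (A ⊗ₖ B) = (Fintype.card q : ℝ) * trNorm B := by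
  set P := CFC.sqrt (Bᴴ * B) with hPdef
  have hP : P.PosSemidef := Matrix.nonneg_iff_posSemidef.mp (CFC.sqrt_nonneg (Bᴴ * B))
  have hPP : P * P = Bᴴ * B :=
    CFC.sqrt_mul_sqrt_self (Bᴴ * B) (Matrix.nonneg_iff_posSemidef.mpr (Matrix.posSemidef_conjTranspose_mul_self B))
  have h1 : trNorm (A ⊗ₖ B) = ((1 : Matrix q q ℂ) ⊗ₖ P).trace.re := by
    refine trNorm_eq_of_sq (posSemidef_one_kron hP) ?_
    rw [pow_two, ← Matrix.mul_kronecker_mul, Matrix.one_mul, hPP, kron_conjTranspose,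
      ← Matrix.mul_kronecker_mul, hA]
  rw [h1, Matrix.trace_kronecker, Matrix.trace_one]
  rw [trNorm, ← hPdef]
  simp

end Kron

end Helpers

/-- Lemma 5.4: the trace distance of `f(Z)ρ_Z` from `U₁ρ_Z` is at most the
square root of half the variational distance of the classical joint distribution obtained
from the Pretty Good Measurement. The joint distribution is
`r(z, z') = p(z)·Tr(E_{z'} ρ_z)`, and the variational distance compares the induced
distribution of `(f(z), z')` with `(uniform bit, z')`. -/
theorem stmt10 {Z : Type*} [Fintype Z] [DecidableEq Z] (D : ℕ)
    (p : Z → ℝ) (hp : ∀ z, 0 ≤ p z) (hsum : ∑ z, p z = 1)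
    (ρ : Z → Matrix (Fin D) (Fin D) ℂ) (hρ : ∀ z, IsDensity (ρ z))
    (f : Z → ZMod 2)
    (hpos : (∑ z, (p z : ℂ) • ρ z).PosDef) :
    trDist
        (∑ z, (p z : ℂ) • (Matrix.single (f z) (f z) (1:ℂ) ⊗ₖ ρ z))
        ((2:ℂ)⁻¹ • ((1 : Matrix (ZMod 2) (ZMod 2) ℂ) ⊗ₖ ∑ z, (p z : ℂ) • ρ z))
      ≤ Real.sqrt ((1/2) * ((1/2) * ∑ b : ZMod 2, ∑ z' : Z,
          |(∑ z ∈ Finset.univ.filter (fun z => f z = b),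
              p z * ((pgm p ρ hpos z' * ρ z).trace).re)
            - (1/2) * ∑ z : Z, p z * ((pgm p ρ hpos z' * ρ z).trace).re|)) := by
  classical
  have h2 : ∀ x : ZMod 2, x = 0 ∨ x = 1 := by decide
  have hsC : ∀ g : ZMod 2 → ℂ, ∑ x : ZMod 2, g x = g 0 + g 1 := by
    intro g
    rw [show (Finset.univ : Finset (ZMod 2)) = {0, 1} by decide, Finset.sum_insert (by decide),
      Finset.sum_singleton]
  have hsR : ∀ g : ZMod 2 → ℝ, ∑ x : ZMod 2, g x = g 0 + g 1 := by
    intro g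
    rw [show (Finset.univ : Finset (ZMod 2)) = {0, 1} by decide, Finset.sum_insert (by decide),
      Finset.sum_singleton]
  set c : Z → ℝ := fun z => if f z = 0 then p z / 2 else -(p z) / 2 with hc
  set M : Matrix (Fin D) (Fin D) ℂ := ∑ z, ((c z : ℝ) : ℂ) • ρ z with hMdef
  set Dm : Matrix (ZMod 2) (ZMod 2) ℂ :=
    Matrix.single 0 0 1 - Matrix.single 1 1 1 with hDm
  -- Step A : the difference is a Kronecker product
  have hdiff : (∑ z, (p z : ℂ) • (Matrix.single (f z) (f z) (1:ℂ) ⊗ₖ ρ z))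
      - (2:ℂ)⁻¹ • ((1 : Matrix (ZMod 2) (ZMod 2) ℂ) ⊗ₖ ∑ z, (p z : ℂ) • ρ z) = Dm ⊗ₖ M := by
    refine Matrix.ext fun x y => ?_
    obtain ⟨a, i⟩ := x
    obtain ⟨b, j⟩ := y
    simp only [hMdef, hDm, Matrix.sub_apply, Matrix.smul_apply, Matrix.sum_apply,
      Matrix.kroneckerMap_apply, smul_eq_mul]
    have expand : (2:ℂ)⁻¹ * ((1 : Matrix (ZMod 2) (ZMod 2) ℂ) a b * ∑ z, (p z : ℂ) * ρ z i j)
        = ∑ z, (2:ℂ)⁻¹ * ((1 : Matrix (ZMod 2) (ZMod 2) ℂ) a b * ((p z : ℂ) * ρ z i j)) := by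
      rw [Finset.mul_sum, Finset.mul_sum]
    rw [expand, Finset.mul_sum, ← Finset.sum_sub_distrib]
    refine Finset.sum_congr rfl fun z _ => ?_
    rcases h2 (f z) with h | h <;> rcases h2 a with ha | ha <;> rcases h2 b with hb | hb <;>
      subst ha <;> subst hb <;>
      simp [hc, h, Matrix.single, Matrix.one_apply, Matrix.sub_apply] <;> push_cast <;>
      ring
  have hDD : Dmᴴ * Dm = 1 := by
    rw [hDm]
    refine Matrix.ext fun a b => ?_
    rcases h2 a with ha | ha <;> rcases h2 b with hb | hb <;> subst ha <;> subst hb <;>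
      simp [Matrix.mul_apply, hsC, Matrix.single, Matrix.one_apply,
        Matrix.conjTranspose_apply]
  -- Step B : trDist equals trNorm M
  have htd : trDist
      (∑ z, (p z : ℂ) • (Matrix.single (f z) (f z) (1:ℂ) ⊗ₖ ρ z))
      ((2:ℂ)⁻¹ • ((1 : Matrix (ZMod 2) (ZMod 2) ℂ) ⊗ₖ ∑ z, (p z : ℂ) • ρ z)) = trNorm M := by
    rw [trDist, hdiff, trNorm_kron M hDD]
    rw [show (Fintype.card (ZMod 2) : ℝ) = 2 by norm_num]
    ring
  -- Step C : M Hermitian, trace of S is 1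
  have hMH : M.IsHermitian := by
    unfold Matrix.IsHermitian
    rw [hMdef, Matrix.conjTranspose_sum]
    refine Finset.sum_congr rfl fun z _ => ?_
    rw [Matrix.conjTranspose_smul, (hρ z).1.1.eq]
    congr 1
    simp [Complex.conj_ofReal]
  have htrS : (∑ z, (p z : ℂ) • ρ z).trace = 1 := by
    rw [Matrix.trace_sum]
    simp only [Matrix.trace_smul, (fun z => (hρ z).2), smul_eq_mul, mul_one]
    rw [show (∑ z, ((p z : ℝ) : ℂ)) = ((∑ z, p z : ℝ) : ℂ) by push_cast; ring, hsum]
    norm_num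
  have hkey := key_ineq hpos hMH htrS
  set R : Matrix (Fin D) (Fin D) ℂ := CFC.sqrt (∑ z, (p z : ℂ) • ρ z) with hRdef
  -- Step E3 : measurement statistics of M
  have hu : ∀ z', ((pgm p ρ hpos z' * M).trace).re
      = ∑ z, c z * ((pgm p ρ hpos z' * ρ z).trace).re := by
    intro z'
    rw [hMdef, Matrix.mul_sum, Matrix.trace_sum, Complex.re_sum]
    refine Finset.sum_congr rfl fun z _ => ?_
    rw [Matrix.mul_smul, Matrix.trace_smul, smul_eq_mul, Complex.re_ofReal_mul]
  -- Step E1 : the variational terms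
  have ha0 : ∀ z', (∑ z ∈ Finset.univ.filter (fun z => f z = 0),
        p z * ((pgm p ρ hpos z' * ρ z).trace).re)
      - (1/2) * ∑ z, p z * ((pgm p ρ hpos z' * ρ z).trace).re
      = ∑ z, c z * ((pgm p ρ hpos z' * ρ z).trace).re := by
    intro z'
    rw [Finset.sum_filter, Finset.mul_sum, ← Finset.sum_sub_distrib]
    refine Finset.sum_congr rfl fun z _ => ?_
    rcases h2 (f z) with h | h <;> simp [hc, h] <;> ring
  have ha1 : ∀ z', (∑ z ∈ Finset.univ.filter (fun z => f z = 1),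
        p z * ((pgm p ρ hpos z' * ρ z).trace).re)
      - (1/2) * ∑ z, p z * ((pgm p ρ hpos z' * ρ z).trace).re
      = -∑ z, c z * ((pgm p ρ hpos z' * ρ z).trace).re := by
    intro z'
    rw [Finset.sum_filter, Finset.mul_sum, ← Finset.sum_sub_distrib, ← Finset.sum_neg_distrib]
    refine Finset.sum_congr rfl fun z _ => ?_
    rcases h2 (f z) with h | h <;> simp [hc, h] <;> ring
  -- Step E4 : the signed sum equals 2 Tr(R⁻¹MR⁻¹M)
  have hsign : (∑ z', (if f z' = 0 then (1:ℝ) else -1) * ((pgm p ρ hpos z' * M).trace).re)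
      = 2 * ((R⁻¹ * M * R⁻¹ * M).trace).re := by
    have hEsum : (∑ z', ((if f z' = 0 then (1:ℝ) else -1 : ℝ) : ℂ) • pgm p ρ hpos z')
        = R⁻¹ * ((2:ℂ) • M) * R⁻¹ := by
      have e1 : ∀ z', ((if f z' = 0 then (1:ℝ) else -1 : ℝ) : ℂ) • pgm p ρ hpos z'
          = R⁻¹ * (((2 * c z' : ℝ) : ℂ) • ρ z') * R⁻¹ := by
        intro z'
        rw [pgm, ← hRdef, smul_smul]
        rw [Matrix.mul_smul, Matrix.smul_mul]
        congr 1
        rcases h2 (f z') with h | h <;> simp [hc, h] <;> push_cast <;> ring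
      rw [Finset.sum_congr rfl fun z' _ => e1 z']
      have hsum2 : (∑ z', ((2 * c z' : ℝ) : ℂ) • ρ z') = (2:ℂ) • M := by
        rw [hMdef, Finset.smul_sum]
        refine Finset.sum_congr rfl fun z _ => ?_
        rw [smul_smul]
        congr 1
        push_cast
        ring
      rw [show (∑ z', R⁻¹ * (((2 * c z' : ℝ) : ℂ) • ρ z') * R⁻¹)
          = R⁻¹ * (∑ z', ((2 * c z' : ℝ) : ℂ) • ρ z') * R⁻¹ by
        rw [Matrix.mul_sum, Matrix.sum_mul], hsum2]
    calc (∑ z', (if f z' = 0 then (1:ℝ) else -1) * ((pgm p ρ hpos z' * M).trace).re)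
        = (∑ z', ((if f z' = 0 then (1:ℝ) else -1 : ℝ) : ℂ) * (pgm p ρ hpos z' * M).trace).re := by
          conv_rhs => rw [Complex.re_sum]
          refine Finset.sum_congr rfl fun z' _ => ?_
          rw [Complex.re_ofReal_mul]
      _ = (((∑ z', ((if f z' = 0 then (1:ℝ) else -1 : ℝ) : ℂ) • pgm p ρ hpos z') * M).trace).re := by
          congr 1
          rw [Finset.sum_mul, Matrix.trace_sum]
          refine Finset.sum_congr rfl fun z' _ => ?_
          rw [Matrix.smul_mul, Matrix.trace_smul, smul_eq_mul]
      _ = ((R⁻¹ * ((2:ℂ) • M) * R⁻¹ * M).trace).re := by rw [hEsum]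
      _ = 2 * ((R⁻¹ * M * R⁻¹ * M).trace).re := by
          rw [show R⁻¹ * ((2:ℂ) • M) * R⁻¹ * M = (2:ℂ) • (R⁻¹ * M * R⁻¹ * M) by
            rw [Matrix.mul_smul, Matrix.smul_mul, Matrix.smul_mul]]
          rw [Matrix.trace_smul, smul_eq_mul]
          simp [Complex.mul_re]
  -- Final assembly
  rw [htd]
  refine hkey.trans ?_
  refine Real.sqrt_le_sqrt ?_
  rw [hsR]
  have h0 : (∑ z' : Z, |(∑ z ∈ Finset.univ.filter (fun z => f z = 0),
        p z * ((pgm p ρ hpos z' * ρ z).trace).re)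
      - (1/2) * ∑ z : Z, p z * ((pgm p ρ hpos z' * ρ z).trace).re|)
      = ∑ z' : Z, |∑ z, c z * ((pgm p ρ hpos z' * ρ z).trace).re| := by
    refine Finset.sum_congr rfl fun z' _ => ?_
    rw [ha0 z']
  have h1 : (∑ z' : Z, |(∑ z ∈ Finset.univ.filter (fun z => f z = 1),
        p z * ((pgm p ρ hpos z' * ρ z).trace).re)
      - (1/2) * ∑ z : Z, p z * ((pgm p ρ hpos z' * ρ z).trace).re|)
      = ∑ z' : Z, |∑ z, c z * ((pgm p ρ hpos z' * ρ z).trace).re| := by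
    refine Finset.sum_congr rfl fun z' _ => ?_
    rw [ha1 z', abs_neg]
  rw [h0, h1]
  have hb : 2 * ((R⁻¹ * M * R⁻¹ * M).trace).re
      ≤ ∑ z' : Z, |∑ z, c z * ((pgm p ρ hpos z' * ρ z).trace).re| := by
    rw [← hsign]
    refine Finset.sum_le_sum fun z' _ => ?_
    rw [hu z']
    rcases h2 (f z') with h | h <;> simp [h]
    · exact le_abs_self _
    · exact neg_le_abs _
  linarith
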